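/- Let x, a, y be distinct vertices of a graph G and let ℓ ≥ 3 be an odd integer. Suppose Q₁ = u₀, …, u_ℓ is a path of length ℓ with u₀ = a, u_ℓ = y; Q₂ = v₀, …, v_ℓ is a path of length ℓ with v₀ = a and v_ℓ = u_{ℓ−1}, and v_i ≠ u_j for all i ∈ [ℓ−1], j ∈ [ℓ]; P₁ is a path from x to v₁ and P_i is a path from u_{i−1} to v_i for i ∈ {2, …, ℓ−1}; and the paths P₁, …, P_{ℓ−1} are pairwise vertex-disjoint and disjoint from {a, u_{ℓ−1}, y}. Then the subgraph H with vertex set {a, u_{ℓ−1}, y} ∪ ⋃_{i=1}^{ℓ−1} V(P_i) and edge set E(Q₁) ∪ E(Q₂) ∪ ⋃_{i=1}^{ℓ−1} E(P_i) is an (x, a, y)-absorber: it contains an x–y path with vertex set V(H) and an x–y path with vertex set V(H) ∖ {a}. -/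

import Mathlib

noncomputable section

namespace AbsorberAux
open SimpleGraph

variable {V : Type*} {G : SimpleGraph V}

lemma getVert_mem_support {A B : V} (p : G.Walk A B) (n : ℕ) :
    p.getVert n ∈ p.support := by
  induction p generalizing n with
  | nil => cases n <;> simp [Walk.getVert]
  | cons h q ih =>
    cases n with
    | zero => simp [Walk.getVert]
    | succ n =>
      rw [Walk.getVert_cons_succ, Walk.support_cons]
      exact List.mem_cons_of_mem _ (ih n)

lemma edge_getVert_mem_edges {A B : V} (p : G.Walk A B) :
    ∀ {n : ℕ}, n < p.length → s(p.getVert n, p.getVert (n+1)) ∈ p.edges := by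
  induction p with
  | nil => intro n hn; simp at hn
  | cons h q ih =>
    intro n hn
    cases n with
    | zero =>
      simp only [Walk.getVert_zero, Walk.getVert_cons_succ, Walk.edges_cons]
      exact List.mem_cons_self
    | succ n =>
      rw [Walk.getVert_cons_succ, Walk.getVert_cons_succ, Walk.edges_cons]
      refine List.mem_cons_of_mem _ (ih ?_)
      simpa [Walk.length_cons] using hn

lemma getVert_inj {A B : V} :
    ∀ {p : G.Walk A B}, p.IsPath → ∀ i j, i ≤ p.length → j ≤ p.length →
      p.getVert i = p.getVert j → i = j := by
  intro p
  induction p with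
  | nil => intro _ i j hi hj _; simp [Walk.length_nil] at hi hj; omega
  | cons h q ih =>
    intro hp i j hi hj heq
    have hp' := (Walk.cons_isPath_iff _ _).mp hp
    match i, j with
    | 0, 0 => rfl
    | 0, (j+1) =>
      exfalso
      rw [Walk.getVert_zero, Walk.getVert_cons_succ] at heq
      exact hp'.2 (heq ▸ getVert_mem_support q j)
    | (i+1), 0 =>
      exfalso
      rw [Walk.getVert_zero, Walk.getVert_cons_succ] at heq
      exact hp'.2 (heq ▸ getVert_mem_support q i)
    | (i+1), (j+1) =>
      rw [Walk.getVert_cons_succ, Walk.getVert_cons_succ] at heq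
      rw [Walk.length_cons] at hi hj
      exact congrArg Nat.succ (ih hp'.1 i j (by omega) (by omega) heq)

lemma isPath_append {A B C : V} {p : G.Walk A B} {q : G.Walk B C} (hp : p.IsPath)
    (hq : q.IsPath) (h : ∀ w, w ∈ p.support → w ∈ q.support → w = B) :
    (p.append q).IsPath := by
  rw [Walk.isPath_def, Walk.support_append]
  refine List.Nodup.append hp.support_nodup hq.support_nodup.tail ?_
  intro w hwp hwt
  have hwq : w ∈ q.support := List.mem_of_mem_tail hwt
  have hwB := h w hwp hwq
  subst hwB
  have h3 := hq.support_nodup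
  rw [Walk.support_eq_cons] at h3
  exact (List.nodup_cons.mp h3).1 hwt


def absF {V : Type*} (G : SimpleGraph V) (x y : V) (ℓ : ℕ) (hℓ : 3 ≤ ℓ)
    (u v : ℕ → V)
    (P : ∀ i : ℕ, G.Walk (if i = 1 then x else u (i - 1)) (v i))
    (hu : ∀ s : ℕ, s + 1 ≤ ℓ - 1 → G.Adj (u s) (u (s + 1)))
    (ha : G.Adj (u (ℓ - 1)) y)
    (hb : G.Adj (v (ℓ - 1)) (u (ℓ - 1)))
    (hv : ∀ s : ℕ, s + 1 ≤ ℓ - 1 → G.Adj (v s) (v (s + 1))) :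
    (k : ℕ) → k ≤ ℓ - 2 → G.Walk (u (ℓ - 1 - k)) y
  | 0, _ => Walk.cons ha Walk.nil
  | 1, _ => ((P (ℓ - 1)).copy (if_neg (by omega)) rfl).append
      (Walk.cons hb (Walk.cons ha Walk.nil))
  | (k+2), hk =>
      ((P (ℓ - 1 - (k+2) + 1)).copy (if_neg (by omega)) rfl).append
        (Walk.cons (hv (ℓ - 1 - (k+2) + 1) (by omega))
          (((P (ℓ - 1 - (k+2) + 2)).reverse.copy rfl (if_neg (by omega))).append
            (Walk.cons (hu (ℓ - 1 - (k+2) + 1) (by omega))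
              ((absF G x y ℓ hℓ u v P hu ha hb hv k (by omega)).copy
                (by congr 1; omega) rfl))))

lemma isPath_append' {V : Type*} {G : SimpleGraph V} {A B C : V} {p : G.Walk A B}
    {q : G.Walk B C} (hp : p.IsPath) (hq : q.IsPath)
    (h : ∀ w, w ∈ p.support → w ∈ q.support → w = B) : (p.append q).IsPath := by
  rw [Walk.isPath_def, Walk.support_append]
  refine List.Nodup.append hp.support_nodup hq.support_nodup.tail ?_
  intro w hwp hwt
  have hwB := h w hwp (List.mem_of_mem_tail hwt)
  subst hwB
  have h3 := hq.support_nodup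
  rw [Walk.support_eq_cons] at h3
  exact (List.nodup_cons.mp h3).1 hwt

lemma absF_spec {V : Type*} (G : SimpleGraph V) (x y : V) (ℓ : ℕ) (hℓ : 3 ≤ ℓ)
    (u v : ℕ → V)
    (P : ∀ i : ℕ, G.Walk (if i = 1 then x else u (i - 1)) (v i))
    (hu : ∀ s : ℕ, s + 1 ≤ ℓ - 1 → G.Adj (u s) (u (s + 1)))
    (ha : G.Adj (u (ℓ - 1)) y)
    (hb : G.Adj (v (ℓ - 1)) (u (ℓ - 1)))
    (hv : ∀ s : ℕ, s + 1 ≤ ℓ - 1 → G.Adj (v s) (v (s + 1)))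
    (E₁ E₂ : List (Sym2 V))
    (heu : ∀ s : ℕ, s + 1 ≤ ℓ - 1 → s(u s, u (s + 1)) ∈ E₁)
    (hea : s(u (ℓ - 1), y) ∈ E₁)
    (heb : s(v (ℓ - 1), u (ℓ - 1)) ∈ E₂)
    (hev : ∀ s : ℕ, s + 1 ≤ ℓ - 1 → s(v s, v (s + 1)) ∈ E₂)
    (hPpath : ∀ i : ℕ, 1 ≤ i → i ≤ ℓ - 1 → (P i).IsPath)
    (hPdisj : ∀ i j : ℕ, 1 ≤ i → i ≤ ℓ - 1 → 1 ≤ j → j ≤ ℓ - 1 → i ≠ j →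
      ∀ w : V, w ∈ (P i).support → w ∉ (P j).support)
    (hysupp : ∀ i : ℕ, 1 ≤ i → i ≤ ℓ - 1 → y ∉ (P i).support)
    (hlsupp : ∀ i : ℕ, 1 ≤ i → i ≤ ℓ - 1 → u (ℓ - 1) ∉ (P i).support)
    (huy : u (ℓ - 1) ≠ y)
    (hune : ∀ s : ℕ, 1 ≤ s → s ≤ ℓ - 2 → u s ≠ u (ℓ - 1) ∧ u s ≠ y) :
    ∀ (k : ℕ) (hk : k ≤ ℓ - 2),
      (absF G x y ℓ hℓ u v P hu ha hb hv k hk).IsPath ∧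
      (∀ w : V, w ∈ (absF G x y ℓ hℓ u v P hu ha hb hv k hk).support ↔
        (w = y ∨ w = u (ℓ - 1) ∨ ∃ i, ℓ - k ≤ i ∧ i ≤ ℓ - 1 ∧ w ∈ (P i).support)) ∧
      (∀ e ∈ (absF G x y ℓ hℓ u v P hu ha hb hv k hk).edges,
        e ∈ E₁ ∨ e ∈ E₂ ∨ ∃ i, 1 ≤ i ∧ i ≤ ℓ - 1 ∧ e ∈ (P i).edges)
  | 0, hk => by
    simp only [absF]
    refine ⟨?_, ?_, ?_⟩
    · rw [Walk.cons_isPath_iff]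
      exact ⟨Walk.IsPath.nil, by simp [huy]⟩
    · intro w
      simp only [Walk.support_cons, Walk.support_nil, List.mem_cons,
        List.mem_singleton, List.not_mem_nil]
      constructor
      · rintro (rfl | rfl | h)
        · exact Or.inr (Or.inl rfl)
        · exact Or.inl rfl
        · simp at h
      · rintro (rfl | rfl | ⟨i, hi1, hi2, _⟩)
        · exact Or.inr (Or.inl rfl)
        · exact Or.inl rfl
        · omega
    · intro e he
      simp only [Walk.edges_cons, Walk.edges_nil, List.mem_singleton] at he
      exact Or.inl (he ▸ hea)
  | 1, hk => by
    have hend : v (ℓ - 1) ∈ (P (ℓ - 1)).support := (P (ℓ - 1)).end_mem_support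
    have hl1 : (1:ℕ) ≤ ℓ - 1 := by omega
    have hl2 : ℓ - 1 ≤ ℓ - 1 := le_refl _
    simp only [absF]
    refine ⟨?_, ?_, ?_⟩
    · refine isPath_append' ?_ ?_ ?_
      · rw [Walk.isPath_copy]; exact hPpath (ℓ - 1) hl1 hl2
      · rw [Walk.cons_isPath_iff]
        refine ⟨?_, ?_⟩
        · rw [Walk.cons_isPath_iff]
          exact ⟨Walk.IsPath.nil, by simp [huy]⟩
        · simp only [Walk.support_cons, Walk.support_nil, List.mem_cons,
            List.mem_singleton, List.not_mem_nil]
          push_neg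
          exact ⟨fun h => hlsupp (ℓ - 1) hl1 hl2 (h ▸ hend),
            fun h => hysupp (ℓ - 1) hl1 hl2 (h ▸ hend), trivial⟩
      · intro w hw1 hw2
        rw [Walk.support_copy] at hw1
        simp only [Walk.support_cons, Walk.support_nil, List.mem_cons,
          List.mem_singleton, List.not_mem_nil] at hw2
        rcases hw2 with rfl | rfl | rfl | h
        · rfl
        · exact absurd hw1 (hlsupp (ℓ - 1) hl1 hl2)
        · exact absurd hw1 (hysupp (ℓ - 1) hl1 hl2)
        · exact h.elim
    · intro w
      rw [Walk.mem_support_append_iff]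
      simp only [Walk.support_copy, Walk.support_cons, Walk.support_nil,
        List.mem_cons, List.mem_singleton, List.not_mem_nil]
      constructor
      · rintro (h | rfl | rfl | rfl | h)
        · exact Or.inr (Or.inr ⟨ℓ - 1, by omega, le_refl _, h⟩)
        · exact Or.inr (Or.inr ⟨ℓ - 1, by omega, le_refl _, hend⟩)
        · exact Or.inr (Or.inl rfl)
        · exact Or.inl rfl
        · exact h.elim
      · rintro (rfl | rfl | ⟨i, hi1, hi2, hi3⟩)
        · exact Or.inr (Or.inr (Or.inr (Or.inl rfl)))
        · exact Or.inr (Or.inr (Or.inl rfl))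
        · have : i = ℓ - 1 := by omega
          subst this
          exact Or.inl hi3
    · intro e he
      rw [Walk.edges_append] at he
      simp only [Walk.edges_copy, Walk.edges_cons, Walk.edges_nil, List.mem_append,
        List.mem_cons, List.mem_singleton, List.not_mem_nil] at he
      rcases he with h | rfl | rfl | h
      · exact Or.inr (Or.inr ⟨ℓ - 1, by omega, le_refl _, h⟩)
      · exact Or.inr (Or.inl heb)
      · exact Or.inl hea
      · exact h.elim
  | (k+2), hk => by
    have IH := absF_spec G x y ℓ hℓ u v P hu ha hb hv E₁ E₂ heu hea heb hev
      hPpath hPdisj hysupp hlsupp huy hune k (by omega)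
    obtain ⟨IHpath, IHsupp, IHedge⟩ := IH
    simp only [absF]
    set t := ℓ - 1 - (k + 2) with ht
    have h1t : 1 ≤ t := by omega
    have ht2 : t + 2 ≤ ℓ - 1 := by omega
    have hstart : ∀ i : ℕ, 2 ≤ i → u (i - 1) ∈ (P i).support := by
      intro i hi
      have h2 := ((P i).copy (if_neg (show ¬ i = 1 by omega)) rfl).start_mem_support
      rwa [Walk.support_copy] at h2
    have hstart2 : u (t + 1) ∈ (P (t + 2)).support := by
      have := hstart (t + 2) (by omega)
      simpa using this
    have hend1 : v (t + 1) ∈ (P (t + 1)).support := (P (t + 1)).end_mem_support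
    have hnotF : ∀ i : ℕ, 1 ≤ i → i ≤ t + 2 → ∀ w : V, w ∈ (P i).support →
        w ∉ (absF G x y ℓ hℓ u v P hu ha hb hv k (by omega)).support := by
      intro i hi1 hi2 w hw hwF
      rcases (IHsupp w).mp hwF with rfl | rfl | ⟨j, hj1, hj2, hj3⟩
      · exact hysupp i (by omega) (by omega) hw
      · exact hlsupp i (by omega) (by omega) hw
      · exact hPdisj i j (by omega) (by omega) (by omega) (by omega) (by omega) w hw hj3
    refine ⟨?_, ?_, ?_⟩
    · refine isPath_append' ?_ ?_ ?_
      · rw [Walk.isPath_copy]; exact hPpath (t + 1) (by omega) (by omega)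
      · rw [Walk.cons_isPath_iff]
        constructor
        · refine isPath_append' ?_ ?_ ?_
          · rw [Walk.isPath_copy]; exact (hPpath (t + 2) (by omega) (by omega)).reverse
          · rw [Walk.cons_isPath_iff]
            refine ⟨(Walk.isPath_copy _ _ _).mpr IHpath, ?_⟩
            rw [Walk.support_copy]
            exact hnotF (t + 2) (by omega) (by omega) (u (t + 1)) hstart2
          · intro w hw1 hw2
            rw [Walk.support_copy, Walk.support_reverse, List.mem_reverse] at hw1
            simp only [Walk.support_cons, List.mem_cons, Walk.support_copy] at hw2
            rcases hw2 with rfl | h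
            · rfl
            · exact absurd h (hnotF (t + 2) (by omega) (by omega) w hw1)
        · rw [Walk.mem_support_append_iff]
          push_neg
          constructor
          · rw [Walk.support_copy, Walk.support_reverse, List.mem_reverse]
            exact hPdisj (t + 1) (t + 2) (by omega) (by omega) (by omega) (by omega)
              (by omega) (v (t + 1)) hend1
          · simp only [Walk.support_cons, List.mem_cons, Walk.support_copy]
            push_neg
            constructor
            · intro h
              refine hPdisj (t + 1) (t + 2) (by omega) (by omega) (by omega) (by omega)
                (by omega) (v (t + 1)) hend1 ?_
              rw [h]
              exact hstart2
            · exact hnotF (t + 1) (by omega) (by omega) (v (t + 1)) hend1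
      · intro w hw1 hw2
        rw [Walk.support_copy] at hw1
        simp only [Walk.support_cons, List.mem_cons, Walk.mem_support_append_iff,
          Walk.support_copy, Walk.support_reverse, List.mem_reverse] at hw2
        rcases hw2 with rfl | h | rfl | h
        · rfl
        · exact absurd h (hPdisj (t + 1) (t + 2) (by omega) (by omega) (by omega)
            (by omega) (by omega) w hw1)
        · exact absurd hstart2 (hPdisj (t + 1) (t + 2) (by omega) (by omega) (by omega)
            (by omega) (by omega) _ hw1)
        · exact absurd h (hnotF (t + 1) (by omega) (by omega) w hw1)
    · intro w
      rw [Walk.mem_support_append_iff]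
      simp only [Walk.support_copy, Walk.support_cons, List.mem_cons,
        Walk.mem_support_append_iff, Walk.support_reverse, List.mem_reverse]
      constructor
      · rintro (h | rfl | h | rfl | h)
        · exact Or.inr (Or.inr ⟨t + 1, by omega, by omega, h⟩)
        · exact Or.inr (Or.inr ⟨t + 1, by omega, by omega, hend1⟩)
        · exact Or.inr (Or.inr ⟨t + 2, by omega, by omega, h⟩)
        · exact Or.inr (Or.inr ⟨t + 2, by omega, by omega, hstart2⟩)
        · rcases (IHsupp w).mp h with rfl | rfl | ⟨j, hj1, hj2, hj3⟩
          · exact Or.inl rfl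
          · exact Or.inr (Or.inl rfl)
          · exact Or.inr (Or.inr ⟨j, by omega, hj2, hj3⟩)
      · rintro (rfl | rfl | ⟨i, hi1, hi2, hi3⟩)
        · exact Or.inr (Or.inr (Or.inr (Or.inr ((IHsupp _).mpr (Or.inl rfl)))))
        · exact Or.inr (Or.inr (Or.inr (Or.inr ((IHsupp _).mpr (Or.inr (Or.inl rfl))))))
        · have : i = t + 1 ∨ i = t + 2 ∨ (ℓ - k ≤ i) := by omega
          rcases this with rfl | rfl | hge
          · exact Or.inl hi3
          · exact Or.inr (Or.inr (Or.inl hi3))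
          · exact Or.inr (Or.inr (Or.inr (Or.inr ((IHsupp w).mpr
              (Or.inr (Or.inr ⟨i, hge, hi2, hi3⟩))))))
    · intro e he
      simp only [Walk.edges_append, Walk.edges_copy, Walk.edges_cons, List.mem_append,
        List.mem_cons, Walk.edges_reverse, List.mem_reverse] at he
      rcases he with h | rfl | h | rfl | h
      · exact Or.inr (Or.inr ⟨t + 1, by omega, by omega, h⟩)
      · exact Or.inr (Or.inl (hev (t + 1) (by omega)))
      · exact Or.inr (Or.inr ⟨t + 2, by omega, by omega, h⟩)
      · exact Or.inl (heu (t + 1) (by omega))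
      · exact IHedge e h

end AbsorberAux


/-- the construction of an `(x, a, y)`-absorber. Given distinct vertices
`x, a, y`, an odd `ℓ ≥ 3`, paths `Q₁ : a → y` and `Q₂ : a → u_{ℓ−1}` of length `ℓ`
(internally disjoint as specified), and pairwise vertex-disjoint paths
`P₁ : x → v₁`, `P_i : u_{i−1} → v_i` (`2 ≤ i ≤ ℓ−1`) avoiding `{a, u_{ℓ−1}, y}`,
the subgraph `H` with vertex set `{a, u_{ℓ−1}, y} ∪ ⋃ V(P_i)` and edge set
`E(Q₁) ∪ E(Q₂) ∪ ⋃ E(P_i)` contains an `x`–`y` path with vertex set `V(H)` and an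
`x`–`y` path with vertex set `V(H) ∖ {a}`. -/
theorem statement15 {V : Type*} (G : SimpleGraph V) (x a y : V)
    (hxa : x ≠ a) (hxy : x ≠ y) (hay : a ≠ y)
    (ℓ : ℕ) (hℓ3 : 3 ≤ ℓ) (hodd : Odd ℓ)
    (Q₁ : G.Walk a y) (hQ₁p : Q₁.IsPath) (hQ₁l : Q₁.length = ℓ)
    (Q₂ : G.Walk a (Q₁.getVert (ℓ - 1))) (hQ₂p : Q₂.IsPath) (hQ₂l : Q₂.length = ℓ)
    (hQdisj : ∀ i j : ℕ, 1 ≤ i → i ≤ ℓ - 1 → 1 ≤ j → j ≤ ℓ →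
      Q₂.getVert i ≠ Q₁.getVert j)
    (P : ∀ i : ℕ, G.Walk (if i = 1 then x else Q₁.getVert (i - 1)) (Q₂.getVert i))
    (hPpath : ∀ i : ℕ, 1 ≤ i → i ≤ ℓ - 1 → (P i).IsPath)
    (hPdisj : ∀ i j : ℕ, 1 ≤ i → i ≤ ℓ - 1 → 1 ≤ j → j ≤ ℓ - 1 → i ≠ j →
      ∀ v : V, v ∈ (P i).support → v ∉ (P j).support)
    (hPavoid : ∀ i : ℕ, 1 ≤ i → i ≤ ℓ - 1 → ∀ v ∈ (P i).support,
      v ≠ a ∧ v ≠ Q₁.getVert (ℓ - 1) ∧ v ≠ y) :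
    (∃ Wk : G.Walk x y, Wk.IsPath ∧
        {v : V | v ∈ Wk.support} =
          ({a, Q₁.getVert (ℓ - 1), y} ∪
            ⋃ i ∈ Set.Icc 1 (ℓ - 1), {v : V | v ∈ (P i).support}) ∧
        ∀ e ∈ Wk.edges,
          e ∈ Q₁.edges ∨ e ∈ Q₂.edges ∨ ∃ i ∈ Set.Icc 1 (ℓ - 1), e ∈ (P i).edges) ∧
    (∃ Wk : G.Walk x y, Wk.IsPath ∧
        {v : V | v ∈ Wk.support} =
          (({a, Q₁.getVert (ℓ - 1), y} ∪
            ⋃ i ∈ Set.Icc 1 (ℓ - 1), {v : V | v ∈ (P i).support}) \ {a}) ∧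
        ∀ e ∈ Wk.edges,
          e ∈ Q₁.edges ∨ e ∈ Q₂.edges ∨ ∃ i ∈ Set.Icc 1 (ℓ - 1), e ∈ (P i).edges) := by
  classical
  open AbsorberAux SimpleGraph in
  -- abbreviations
  have hyeq : Q₁.getVert ℓ = y := Q₁.getVert_of_length_le (le_of_eq hQ₁l)
  have hveq : Q₂.getVert ℓ = Q₁.getVert (ℓ - 1) := Q₂.getVert_of_length_le (le_of_eq hQ₂l)
  have hinj : ∀ i j : ℕ, i ≤ ℓ → j ≤ ℓ → Q₁.getVert i = Q₁.getVert j → i = j := by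
    intro i j hi hj h
    exact AbsorberAux.getVert_inj hQ₁p i j (by omega) (by omega) h
  have hu : ∀ s : ℕ, s + 1 ≤ ℓ - 1 → G.Adj (Q₁.getVert s) (Q₁.getVert (s + 1)) :=
    fun s hs => Q₁.adj_getVert_succ (by omega)
  have hv : ∀ s : ℕ, s + 1 ≤ ℓ - 1 → G.Adj (Q₂.getVert s) (Q₂.getVert (s + 1)) :=
    fun s hs => Q₂.adj_getVert_succ (by omega)
  have ha : G.Adj (Q₁.getVert (ℓ - 1)) y := by
    have h := Q₁.adj_getVert_succ (show ℓ - 1 < Q₁.length by omega)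
    rwa [show ℓ - 1 + 1 = ℓ by omega, hyeq] at h
  have hb : G.Adj (Q₂.getVert (ℓ - 1)) (Q₁.getVert (ℓ - 1)) := by
    have h := Q₂.adj_getVert_succ (show ℓ - 1 < Q₂.length by omega)
    rwa [show ℓ - 1 + 1 = ℓ by omega, hveq] at h
  have heu : ∀ s : ℕ, s + 1 ≤ ℓ - 1 →
      s(Q₁.getVert s, Q₁.getVert (s + 1)) ∈ Q₁.edges :=
    fun s hs => AbsorberAux.edge_getVert_mem_edges Q₁ (by omega)
  have hev : ∀ s : ℕ, s + 1 ≤ ℓ - 1 →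
      s(Q₂.getVert s, Q₂.getVert (s + 1)) ∈ Q₂.edges :=
    fun s hs => AbsorberAux.edge_getVert_mem_edges Q₂ (by omega)
  have hea : s(Q₁.getVert (ℓ - 1), y) ∈ Q₁.edges := by
    have h := AbsorberAux.edge_getVert_mem_edges Q₁ (show ℓ - 1 < Q₁.length by omega)
    rwa [show ℓ - 1 + 1 = ℓ by omega, hyeq] at h
  have heb : s(Q₂.getVert (ℓ - 1), Q₁.getVert (ℓ - 1)) ∈ Q₂.edges := by
    have h := AbsorberAux.edge_getVert_mem_edges Q₂ (show ℓ - 1 < Q₂.length by omega)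
    rwa [show ℓ - 1 + 1 = ℓ by omega, hveq] at h
  have hysupp : ∀ i : ℕ, 1 ≤ i → i ≤ ℓ - 1 → y ∉ (P i).support :=
    fun i h1 h2 hy => (hPavoid i h1 h2 y hy).2.2 rfl
  have hlsupp : ∀ i : ℕ, 1 ≤ i → i ≤ ℓ - 1 → Q₁.getVert (ℓ - 1) ∉ (P i).support :=
    fun i h1 h2 hy => (hPavoid i h1 h2 _ hy).2.1 rfl
  have hasupp : ∀ i : ℕ, 1 ≤ i → i ≤ ℓ - 1 → a ∉ (P i).support :=
    fun i h1 h2 hy => (hPavoid i h1 h2 _ hy).1 rfl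
  have huy : Q₁.getVert (ℓ - 1) ≠ y := by
    intro h
    have := hinj (ℓ - 1) ℓ (by omega) le_rfl (h.trans hyeq.symm)
    omega
  have hane : a ≠ Q₁.getVert (ℓ - 1) := by
    intro h
    have h0 : Q₁.getVert 0 = a := Q₁.getVert_zero
    have := hinj 0 (ℓ - 1) (by omega) (by omega) (h0.trans h)
    omega
  have hune : ∀ s : ℕ, 1 ≤ s → s ≤ ℓ - 2 →
      Q₁.getVert s ≠ Q₁.getVert (ℓ - 1) ∧ Q₁.getVert s ≠ y := by
    intro s h1 h2
    constructor
    · intro h; have := hinj s (ℓ - 1) (by omega) (by omega) h; omega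
    · intro h; have := hinj s ℓ (by omega) le_rfl (h.trans hyeq.symm); omega
  have spec := AbsorberAux.absF_spec G x y ℓ hℓ3 Q₁.getVert Q₂.getVert P hu ha hb hv
    Q₁.edges Q₂.edges heu hea heb hev hPpath hPdisj hysupp hlsupp huy hune
  have hstart : ∀ i : ℕ, 2 ≤ i → Q₁.getVert (i - 1) ∈ (P i).support := by
    intro i hi
    have h2 := ((P i).copy (if_neg (show ¬ i = 1 by omega)) rfl).start_mem_support
    rwa [SimpleGraph.Walk.support_copy] at h2
  have hstart2 : Q₁.getVert 1 ∈ (P 2).support := hstart 2 (by omega)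
  have hend : ∀ i : ℕ, Q₂.getVert i ∈ (P i).support := fun i => (P i).end_mem_support
  have hPF : ∀ (k : ℕ) (hk : k ≤ ℓ - 2), ∀ i, 1 ≤ i → i ≤ ℓ - 1 → i < ℓ - k →
      ∀ w, w ∈ (P i).support →
        w ∉ (AbsorberAux.absF G x y ℓ hℓ3 Q₁.getVert Q₂.getVert P hu ha hb hv k hk).support := by
    intro k hk i h1 h2 h3 w hw hmem
    rcases ((spec k hk).2.1 w).mp hmem with rfl | rfl | ⟨j, hj1, hj2, hj3⟩
    · exact hysupp i h1 h2 hw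
    · exact hlsupp i h1 h2 hw
    · exact hPdisj i j h1 h2 (by omega) hj2 (by omega) w hw hj3
  have haF : ∀ (k : ℕ) (hk : k ≤ ℓ - 2),
      a ∉ (AbsorberAux.absF G x y ℓ hℓ3 Q₁.getVert Q₂.getVert P hu ha hb hv k hk).support := by
    intro k hk hmem
    rcases ((spec k hk).2.1 a).mp hmem with h | h | ⟨j, hj1, hj2, hj3⟩
    · exact hay h
    · exact hane h
    · exact hasupp j (by omega) hj2 hj3
  have hadj_v1a : G.Adj (Q₂.getVert 1) a := by
    have h := Q₂.adj_getVert_succ (show 0 < Q₂.length by omega)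
    rw [Q₂.getVert_zero] at h
    exact h.symm
  have hadj_au1 : G.Adj a (Q₁.getVert 1) := by
    have h := Q₁.adj_getVert_succ (show 0 < Q₁.length by omega)
    rwa [Q₁.getVert_zero] at h
  have he_v1a : s(Q₂.getVert 1, a) ∈ Q₂.edges := by
    have h := AbsorberAux.edge_getVert_mem_edges Q₂ (show 0 < Q₂.length by omega)
    rw [Q₂.getVert_zero] at h
    rwa [Sym2.eq_swap]
  have he_au1 : s(a, Q₁.getVert 1) ∈ Q₁.edges := by
    have h := AbsorberAux.edge_getVert_mem_edges Q₁ (show 0 < Q₁.length by omega)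
    rwa [Q₁.getVert_zero] at h
  constructor
  · -- Hamilton path through a
    set F := (AbsorberAux.absF G x y ℓ hℓ3 Q₁.getVert Q₂.getVert P hu ha hb hv
      (ℓ - 2) (le_refl _)) with hF
    have hC1 : Q₁.getVert (ℓ - 1 - (ℓ - 2)) = Q₁.getVert 1 := by congr 1; omega
    set C1 := F.copy hC1 rfl with hC1d
    have spec1 := spec (ℓ - 2) (le_refl _)
    have hlow : ℓ - (ℓ - 2) = 2 := by omega
    have hC1supp : ∀ w : V, w ∈ C1.support ↔
        (w = y ∨ w = Q₁.getVert (ℓ - 1) ∨ ∃ i, 2 ≤ i ∧ i ≤ ℓ - 1 ∧ w ∈ (P i).support) := by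
      intro w
      rw [hC1d, SimpleGraph.Walk.support_copy, spec1.2.1 w]
      constructor
      · rintro (h | h | ⟨i, h1, h2, h3⟩)
        exacts [Or.inl h, Or.inr (Or.inl h), Or.inr (Or.inr ⟨i, by omega, h2, h3⟩)]
      · rintro (h | h | ⟨i, h1, h2, h3⟩)
        exacts [Or.inl h, Or.inr (Or.inl h), Or.inr (Or.inr ⟨i, by omega, h2, h3⟩)]
    have hC1nP : ∀ w, w ∈ (P 1).support → w ∉ C1.support := by
      intro w hw hmem
      rw [hC1d, SimpleGraph.Walk.support_copy] at hmem
      exact hPF (ℓ - 2) (le_refl _) 1 le_rfl (by omega) (by omega) w hw hmem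
    have hC1na : a ∉ C1.support := by
      intro hmem
      rw [hC1d, SimpleGraph.Walk.support_copy] at hmem
      exact haF (ℓ - 2) (le_refl _) hmem
    refine ⟨((P 1).copy (if_pos rfl) rfl).append
      (SimpleGraph.Walk.cons hadj_v1a (SimpleGraph.Walk.cons hadj_au1 C1)), ?_, ?_, ?_⟩
    · refine AbsorberAux.isPath_append' ?_ ?_ ?_
      · rw [SimpleGraph.Walk.isPath_copy]; exact hPpath 1 le_rfl (by omega)
      · rw [SimpleGraph.Walk.cons_isPath_iff]
        constructor
        · rw [SimpleGraph.Walk.cons_isPath_iff]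
          refine ⟨?_, hC1na⟩
          rw [hC1d, SimpleGraph.Walk.isPath_copy]
          exact spec1.1
        · simp only [SimpleGraph.Walk.support_cons, List.mem_cons]
          push_neg
          refine ⟨fun h => (hPavoid 1 le_rfl (by omega) _ (hend 1)).1 h, ?_⟩
          exact hC1nP _ (hend 1)
      · intro w hw1 hw2
        rw [SimpleGraph.Walk.support_copy] at hw1
        simp only [SimpleGraph.Walk.support_cons, List.mem_cons] at hw2
        rcases hw2 with rfl | rfl | h
        · rfl
        · exact absurd rfl (hPavoid 1 le_rfl (by omega) _ hw1).1
        · exact absurd h (hC1nP w hw1)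
    · ext w
      simp only [Set.mem_setOf_eq, Set.mem_union, Set.mem_insert_iff,
        Set.mem_singleton_iff, Set.mem_iUnion, Set.mem_Icc, exists_prop]
      rw [SimpleGraph.Walk.mem_support_append_iff]
      simp only [SimpleGraph.Walk.support_copy, SimpleGraph.Walk.support_cons,
        List.mem_cons]
      constructor
      · rintro (h | rfl | rfl | h)
        · exact Or.inr ⟨1, ⟨le_rfl, by omega⟩, h⟩
        · exact Or.inr ⟨1, ⟨le_rfl, by omega⟩, hend 1⟩
        · exact Or.inl (Or.inl rfl)
        · rcases (hC1supp w).mp h with rfl | rfl | ⟨j, hj1, hj2, hj3⟩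
          · exact Or.inl (Or.inr (Or.inr rfl))
          · exact Or.inl (Or.inr (Or.inl rfl))
          · exact Or.inr ⟨j, ⟨by omega, hj2⟩, hj3⟩
      · rintro ((rfl | rfl | rfl) | ⟨i, ⟨hi1, hi2⟩, hi3⟩)
        · exact Or.inr (Or.inr (Or.inl rfl))
        · exact Or.inr (Or.inr (Or.inr ((hC1supp _).mpr (Or.inr (Or.inl rfl)))))
        · exact Or.inr (Or.inr (Or.inr ((hC1supp _).mpr (Or.inl rfl))))
        · rcases Nat.eq_or_lt_of_le hi1 with h1 | h1
          · exact Or.inl (by rw [← h1] at hi3; exact hi3)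
          · exact Or.inr (Or.inr (Or.inr ((hC1supp w).mpr
              (Or.inr (Or.inr ⟨i, by omega, hi2, hi3⟩)))))
    · intro e he
      rw [SimpleGraph.Walk.edges_append] at he
      simp only [SimpleGraph.Walk.edges_copy, SimpleGraph.Walk.edges_cons,
        List.mem_append, List.mem_cons] at he
      rcases he with h | rfl | rfl | h
      · exact Or.inr (Or.inr ⟨1, Set.mem_Icc.mpr ⟨le_rfl, by omega⟩, h⟩)
      · exact Or.inr (Or.inl he_v1a)
      · exact Or.inl he_au1
      · rw [hC1d, SimpleGraph.Walk.edges_copy] at h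
        rcases spec1.2.2 e h with h' | h' | ⟨i, hi1, hi2, hi3⟩
        · exact Or.inl h'
        · exact Or.inr (Or.inl h')
        · exact Or.inr (Or.inr ⟨i, Set.mem_Icc.mpr ⟨hi1, hi2⟩, hi3⟩)
  · -- path avoiding a
    set F := (AbsorberAux.absF G x y ℓ hℓ3 Q₁.getVert Q₂.getVert P hu ha hb hv
      (ℓ - 3) (by omega)) with hF
    have hC2 : Q₁.getVert (ℓ - 1 - (ℓ - 3)) = Q₁.getVert 2 := by congr 1; omega
    set C2 := F.copy hC2 rfl with hC2d
    have spec2 := spec (ℓ - 3) (by omega)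
    have hlow : ℓ - (ℓ - 3) = 3 := by omega
    have hC2supp : ∀ w : V, w ∈ C2.support ↔
        (w = y ∨ w = Q₁.getVert (ℓ - 1) ∨ ∃ i, 3 ≤ i ∧ i ≤ ℓ - 1 ∧ w ∈ (P i).support) := by
      intro w
      rw [hC2d, SimpleGraph.Walk.support_copy, spec2.2.1 w]
      constructor
      · rintro (h | h | ⟨i, h1, h2, h3⟩)
        exacts [Or.inl h, Or.inr (Or.inl h), Or.inr (Or.inr ⟨i, by omega, h2, h3⟩)]
      · rintro (h | h | ⟨i, h1, h2, h3⟩)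
        exacts [Or.inl h, Or.inr (Or.inl h), Or.inr (Or.inr ⟨i, by omega, h2, h3⟩)]
    have hC2nP : ∀ i, 1 ≤ i → i ≤ 2 → ∀ w, w ∈ (P i).support → w ∉ C2.support := by
      intro i h1 h2 w hw hmem
      rw [hC2d, SimpleGraph.Walk.support_copy] at hmem
      exact hPF (ℓ - 3) (by omega) i h1 (by omega) (by omega) w hw hmem
    have hadj_v1v2 : G.Adj (Q₂.getVert 1) (Q₂.getVert 2) := hv 1 (by omega)
    have hadj_u1u2 : G.Adj (Q₁.getVert 1) (Q₁.getVert 2) := hu 1 (by omega)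
    have hP2rev : ((P 2).reverse.copy rfl (if_neg (by omega))) =
      ((P 2).reverse.copy rfl (if_neg (by omega))) := rfl
    refine ⟨((P 1).copy (if_pos rfl) rfl).append
      (SimpleGraph.Walk.cons hadj_v1v2
        (((P 2).reverse.copy rfl (if_neg (by omega))).append
          (SimpleGraph.Walk.cons hadj_u1u2 C2))), ?_, ?_, ?_⟩
    · refine AbsorberAux.isPath_append' ?_ ?_ ?_
      · rw [SimpleGraph.Walk.isPath_copy]; exact hPpath 1 le_rfl (by omega)
      · rw [SimpleGraph.Walk.cons_isPath_iff]
        constructor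
        · refine AbsorberAux.isPath_append' ?_ ?_ ?_
          · rw [SimpleGraph.Walk.isPath_copy]
            exact (hPpath 2 (by omega) (by omega)).reverse
          · rw [SimpleGraph.Walk.cons_isPath_iff]
            constructor
            · rw [hC2d, SimpleGraph.Walk.isPath_copy]; exact spec2.1
            · exact hC2nP 2 (by omega) le_rfl _ hstart2
          · intro w hw1 hw2
            rw [SimpleGraph.Walk.support_copy, SimpleGraph.Walk.support_reverse,
              List.mem_reverse] at hw1
            simp only [SimpleGraph.Walk.support_cons, List.mem_cons] at hw2
            rcases hw2 with rfl | h
            · rfl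
            · exact absurd h (hC2nP 2 (by omega) le_rfl w hw1)
        · rw [SimpleGraph.Walk.mem_support_append_iff]
          push_neg
          constructor
          · rw [SimpleGraph.Walk.support_copy, SimpleGraph.Walk.support_reverse,
              List.mem_reverse]
            exact hPdisj 1 2 le_rfl (by omega) (by omega) (by omega) (by omega)
              _ (hend 1)
          · simp only [SimpleGraph.Walk.support_cons, List.mem_cons]
            push_neg
            constructor
            · intro h
              refine hPdisj 1 2 le_rfl (by omega) (by omega) (by omega) (by omega)
                _ (hend 1) ?_
              rw [h]; exact hstart2
            · exact hC2nP 1 le_rfl (by omega) _ (hend 1)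
      · intro w hw1 hw2
        rw [SimpleGraph.Walk.support_copy] at hw1
        simp only [SimpleGraph.Walk.support_cons, List.mem_cons,
          SimpleGraph.Walk.mem_support_append_iff, SimpleGraph.Walk.support_copy,
          SimpleGraph.Walk.support_reverse, List.mem_reverse] at hw2
        rcases hw2 with rfl | h | rfl | h
        · rfl
        · exact absurd h (hPdisj 1 2 le_rfl (by omega) (by omega) (by omega)
            (by omega) w hw1)
        · exact absurd hstart2 (hPdisj 1 2 le_rfl (by omega) (by omega) (by omega)
            (by omega) _ hw1)
        · exact absurd h (hC2nP 1 le_rfl (by omega) w hw1)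
    · ext w
      simp only [Set.mem_setOf_eq, Set.mem_diff, Set.mem_union, Set.mem_insert_iff,
        Set.mem_singleton_iff, Set.mem_iUnion, Set.mem_Icc, exists_prop]
      rw [SimpleGraph.Walk.mem_support_append_iff]
      simp only [SimpleGraph.Walk.support_copy, SimpleGraph.Walk.support_cons,
        List.mem_cons, SimpleGraph.Walk.mem_support_append_iff,
        SimpleGraph.Walk.support_reverse, List.mem_reverse]
      constructor
      · rintro (h | rfl | h | rfl | h)
        · exact ⟨Or.inr ⟨1, ⟨le_rfl, by omega⟩, h⟩,
            fun hh => (hPavoid 1 le_rfl (by omega) w h).1 hh⟩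
        · exact ⟨Or.inr ⟨1, ⟨le_rfl, by omega⟩, hend 1⟩,
            fun hh => (hPavoid 1 le_rfl (by omega) _ (hend 1)).1 hh⟩
        · exact ⟨Or.inr ⟨2, ⟨by omega, by omega⟩, h⟩,
            fun hh => (hPavoid 2 (by omega) (by omega) w h).1 hh⟩
        · exact ⟨Or.inr ⟨2, ⟨by omega, by omega⟩, hstart2⟩,
            fun hh => (hPavoid 2 (by omega) (by omega) _ hstart2).1 hh⟩
        · rcases (hC2supp w).mp h with rfl | rfl | ⟨j, hj1, hj2, hj3⟩
          · exact ⟨Or.inl (Or.inr (Or.inr rfl)), fun hh => hay hh.symm⟩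
          · exact ⟨Or.inl (Or.inr (Or.inl rfl)), fun hh => hane hh.symm⟩
          · exact ⟨Or.inr ⟨j, ⟨by omega, hj2⟩, hj3⟩,
              fun hh => (hPavoid j (by omega) hj2 w hj3).1 hh⟩
      · rintro ⟨(rfl | rfl | rfl) | ⟨i, ⟨hi1, hi2⟩, hi3⟩, hne⟩
        · exact absurd rfl hne
        · exact Or.inr (Or.inr (Or.inr (Or.inr ((hC2supp _).mpr (Or.inr (Or.inl rfl))))))
        · exact Or.inr (Or.inr (Or.inr (Or.inr ((hC2supp _).mpr (Or.inl rfl)))))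
        · have : i = 1 ∨ i = 2 ∨ 3 ≤ i := by omega
          rcases this with rfl | rfl | h3
          · exact Or.inl hi3
          · exact Or.inr (Or.inr (Or.inl hi3))
          · exact Or.inr (Or.inr (Or.inr (Or.inr ((hC2supp w).mpr
              (Or.inr (Or.inr ⟨i, h3, hi2, hi3⟩))))))
    · intro e he
      rw [SimpleGraph.Walk.edges_append] at he
      simp only [SimpleGraph.Walk.edges_append, SimpleGraph.Walk.edges_copy,
        SimpleGraph.Walk.edges_cons, List.mem_append, List.mem_cons,
        SimpleGraph.Walk.edges_reverse, List.mem_reverse] at he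
      rcases he with h | rfl | h | rfl | h
      · exact Or.inr (Or.inr ⟨1, Set.mem_Icc.mpr ⟨le_rfl, by omega⟩, h⟩)
      · exact Or.inr (Or.inl (hev 1 (by omega)))
      · exact Or.inr (Or.inr ⟨2, Set.mem_Icc.mpr ⟨by omega, by omega⟩, h⟩)
      · exact Or.inl (heu 1 (by omega))
      · rw [hC2d, SimpleGraph.Walk.edges_copy] at h
        rcases spec2.2.2 e h with h' | h' | ⟨i, hi1, hi2, hi3⟩
        · exact Or.inl h'
        · exact Or.inr (Or.inl h')
        · exact Or.inr (Or.inr ⟨i, Set.mem_Icc.mpr ⟨hi1, hi2⟩, hi3⟩)
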